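/- arXiv:2003.07633 — 3 statements merged into one kernel-verified Lean document; each statement's English description precedes it below -/
import Mathlib

section
/- Let O be a valuation ring whose residue characteristic is different from 2 (i.e., v(2) = 0, where v is the additive valuation), and let A, B, C, a, b, c ∈ O be such that each of the six sets {A,B,c}, {A,b,C}, {a,B,C}, {A,b,c}, {a,B,c}, {a,b,C} contains an element of valuation 0. Then at least one of the four invariants I_3, I_3', I_3'', I_6 has valuation 0 (equivalently, it is not the case that v(I_3), v(I_3'), v(I_3''), v(I_6) are all positive). -/
set_option maxHeartbeats 1000000


lemma sq0 {R : Type*} [CommRing R] [IsDomain R] {x : R} (h : x^2 = 0) : x = 0 := by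
  exact pow_eq_zero_iff (n := 2) (by norm_num) |>.mp h


lemma orot {p q r : Prop} (h : p ∨ q ∨ r) : q ∨ r ∨ p := by tauto
lemma oswap {p q r : Prop} (h : p ∨ q ∨ r) : p ∨ r ∨ q := by tauto
lemma oswap12 {p q r : Prop} (h : p ∨ q ∨ r) : q ∨ p ∨ r := by tauto

/-- diagonal case A = 0, a = 0 -/
lemma case1 {R : Type*} [CommRing R] [IsDomain R] (htwo : (2:R) ≠ 0)
    (A B C a b c : R)
    (h3 : a ≠ 0 ∨ B ≠ 0 ∨ C ≠ 0)
    (h4 : A ≠ 0 ∨ b ≠ 0 ∨ c ≠ 0)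
    (h5 : a ≠ 0 ∨ B ≠ 0 ∨ c ≠ 0)
    (h6 : a ≠ 0 ∨ b ≠ 0 ∨ C ≠ 0)
    (hI3' : A*(a^2 - 4*B*C) + B*(b^2 - 4*A*C) + C*(c^2 - 4*A*B) = 0)
    (hI6 : (a^2 - 4*B*C)*(b^2 - 4*A*C)*(c^2 - 4*A*B) = 0)
    (hA : A = 0) (ha : a = 0) : False := by
  subst hA ha
  have e1 : B*b^2 + C*c^2 = 0 := by linear_combination hI3'
  have e2 : B*(C*(b*c)^2) = 0 := by
    have h4' : (2:R)*(2:R) ≠ 0 := mul_ne_zero htwo htwo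
    have := mul_left_cancel₀ (a := -(2*2)) (by simpa using h4')
      (b := B*(C*(b*c)^2)) (c := 0) (by linear_combination hI6)
    simpa using this
  rcases mul_eq_zero.mp e2 with hB | e3
  · subst hB
    have hC : C ≠ 0 := by tauto
    have hc : c = 0 := sq0 (by
      rcases mul_eq_zero.mp (show C * c^2 = 0 by linear_combination e1) with h | h
      · exact absurd h hC
      · exact h)
    tauto
  · rcases mul_eq_zero.mp e3 with hC | e4
    · subst hC
      have hB : B ≠ 0 := by tauto
      have hb : b = 0 := sq0 (by
        rcases mul_eq_zero.mp (show B * b^2 = 0 by linear_combination e1) with h | h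
        · exact absurd h hB
        · exact h)
      tauto
    · rcases mul_eq_zero.mp (sq0 e4 : b*c = 0) with hb | hc
      · subst hb
        rcases mul_eq_zero.mp (show C * c^2 = 0 by linear_combination e1) with hC | h
        · tauto
        · have := sq0 h; tauto
      · subst hc
        rcases mul_eq_zero.mp (show B * b^2 = 0 by linear_combination e1) with hB | h
        · tauto
        · have := sq0 h; tauto

/-- off-diagonal case A = 0, b = 0 -/
lemma case2 {R : Type*} [CommRing R] [IsDomain R]
    (A B C a b c : R)
    (h2' : A ≠ 0 ∨ b ≠ 0 ∨ C ≠ 0)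
    (h4 : A ≠ 0 ∨ b ≠ 0 ∨ c ≠ 0)
    (hI3' : A*(a^2 - 4*B*C) + B*(b^2 - 4*A*C) + C*(c^2 - 4*A*B) = 0)
    (hA : A = 0) (hb : b = 0) : False := by
  subst hA hb
  have hc : c ≠ 0 := by tauto
  rcases mul_eq_zero.mp (show C * c^2 = 0 by linear_combination hI3') with hC | h
  · tauto
  · exact hc (sq0 h)

lemma key {R : Type*} [CommRing R] [IsDomain R] (htwo : (2:R) ≠ 0)
    (A B C a b c : R)
    (h1 : A ≠ 0 ∨ B ≠ 0 ∨ c ≠ 0)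
    (h2' : A ≠ 0 ∨ b ≠ 0 ∨ C ≠ 0)
    (h3 : a ≠ 0 ∨ B ≠ 0 ∨ C ≠ 0)
    (h4 : A ≠ 0 ∨ b ≠ 0 ∨ c ≠ 0)
    (h5 : a ≠ 0 ∨ B ≠ 0 ∨ c ≠ 0)
    (h6 : a ≠ 0 ∨ b ≠ 0 ∨ C ≠ 0)
    (hI3 : A*B*C = 0)
    (hI3' : A*(a^2 - 4*B*C) + B*(b^2 - 4*A*C) + C*(c^2 - 4*A*B) = 0)
    (hI3'' : -4*A*B*C + A*a^2 + B*b^2 + C*c^2 - a*b*c = 0)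
    (hI6 : (a^2 - 4*B*C)*(b^2 - 4*A*C)*(c^2 - 4*A*B) = 0) : False := by
  have habc : a*(b*c) = 0 := by linear_combination hI3' - hI3'' + 8*hI3
  have hABC : A*(B*C) = 0 := by linear_combination hI3
  rcases mul_eq_zero.mp hABC with hA | hBC
  · rcases mul_eq_zero.mp habc with ha | hbc
    · exact case1 htwo A B C a b c h3 h4 h5 h6 hI3' hI6 hA ha
    · rcases mul_eq_zero.mp hbc with hb | hc
      · exact case2 A B C a b c h2' h4 hI3' hA hb
      · exact case2 A C B a c b (oswap h1) (oswap h4) (by linear_combination hI3') hA hc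
  · rcases mul_eq_zero.mp hBC with hB | hC
    · rcases mul_eq_zero.mp habc with ha | hbc
      · exact case2 B A C b a c (oswap12 h3) (oswap12 h5) (by linear_combination hI3') hB ha
      · rcases mul_eq_zero.mp hbc with hb | hc
        · exact case1 htwo B C A b c a (orot h2') (orot h5) (orot h6) (orot h4)
            (by linear_combination hI3') (by linear_combination hI6) hB hb
        · exact case2 B C A b c a (orot h1) (orot h5) (by linear_combination hI3') hB hc
    · rcases mul_eq_zero.mp habc with ha | hbc
      · exact case2 C A B c a b (orot (orot h3)) (orot (orot h6)) (by linear_combination hI3') hC ha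
      · rcases mul_eq_zero.mp hbc with hb | hc
        · exact case2 C B A c b a (oswap12 (orot h2')) (oswap12 (orot h6)) (by linear_combination hI3') hC hb
        · exact case1 htwo C A B c a b (orot (orot h1)) (orot (orot h6)) (orot (orot h4)) (orot (orot h5))
            (by linear_combination hI3') (by linear_combination hI6) hC hc


/-- Corollary (COR:Normalization_Invariants): if the coefficients of the quartic are
normalized as in Proposition (norm1) (each of the six sets `{A,B,c}`, `{A,b,C}`,
`{a,B,C}`, `{A,b,c}`, `{a,B,c}`, `{a,b,C}` contains an element of valuation `0`),
and the residue characteristic is different from `2`, then at least one of the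
invariants `I₃, I₃', I₃'', I₆` has valuation `0`. -/
theorem stmt_2 {O : Type*} [CommRing O] {Γ : Type*} [AddCommGroup Γ] [LinearOrder Γ] [IsOrderedAddMonoid Γ]
    (v : AddValuation O (WithTop Γ))
    (hnonneg : ∀ x : O, 0 ≤ v x) (htop : ∀ x : O, v x = ⊤ ↔ x = 0)
    (h2 : v 2 = 0)
    (A B C a b c : O)
    (h1 : v A = 0 ∨ v B = 0 ∨ v c = 0)
    (h2' : v A = 0 ∨ v b = 0 ∨ v C = 0)
    (h3 : v a = 0 ∨ v B = 0 ∨ v C = 0)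
    (h4 : v A = 0 ∨ v b = 0 ∨ v c = 0)
    (h5 : v a = 0 ∨ v B = 0 ∨ v c = 0)
    (h6 : v a = 0 ∨ v b = 0 ∨ v C = 0) :
    v (A*B*C) = 0 ∨
    v (A*(a^2 - 4*B*C) + B*(b^2 - 4*A*C) + C*(c^2 - 4*A*B)) = 0 ∨
    v (-4*A*B*C + A*a^2 + B*b^2 + C*c^2 - a*b*c) = 0 ∨
    v ((a^2 - 4*B*C)*(b^2 - 4*A*C)*(c^2 - 4*A*B)) = 0 := by
  classical
  set m : Ideal O :=
    { carrier := {x | 0 < v x}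
      zero_mem' := by
        have : v (0:O) = ⊤ := (htop 0).mpr rfl
        simp only [Set.mem_setOf_eq, this]
        exact lt_of_le_of_ne le_top (by simp)
      add_mem' := fun {x y} hx hy =>
        lt_of_lt_of_le (lt_min hx hy) (v.map_add x y)
      smul_mem' := fun r x hx => by
        simp only [Set.mem_setOf_eq, smul_eq_mul, v.map_mul]
        exact lt_of_lt_of_le hx (le_add_of_nonneg_left (hnonneg r)) } with hm
  have hmem : ∀ x : O, x ∈ m ↔ v x ≠ 0 := fun x =>
    ⟨fun h => ne_of_gt h, fun h => lt_of_le_of_ne (hnonneg x) (Ne.symm h)⟩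
  haveI hprime : m.IsPrime := by
    constructor
    · intro htop'
      have h1m : (1:O) ∈ m := htop' ▸ Submodule.mem_top
      exact (hmem 1).mp h1m v.map_one
    · intro x y hxy
      by_contra hcon
      push_neg at hcon
      have hx : v x = 0 := not_not.mp (fun h => hcon.1 ((hmem x).mpr h))
      have hy : v y = 0 := not_not.mp (fun h => hcon.2 ((hmem y).mpr h))
      have : v (x*y) = 0 := by rw [v.map_mul, hx, hy, add_zero]
      exact (hmem _).mp hxy this
  haveI : IsDomain (O ⧸ m) := Ideal.Quotient.isDomain m
  set π := Ideal.Quotient.mk m with hπdef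
  have hπ : ∀ x : O, π x = 0 ↔ v x ≠ 0 := fun x =>
    (Ideal.Quotient.eq_zero_iff_mem).trans (hmem x)
  have hπ' : ∀ x : O, π x ≠ 0 ↔ v x = 0 := fun x => by
    rw [← not_iff_not, not_not, hπ]
  have htwo : (2 : O ⧸ m) ≠ 0 := by
    have : π 2 ≠ 0 := (hπ' 2).mpr h2
    simpa [hπdef, map_ofNat] using this
  by_contra hgoal
  push_neg at hgoal
  obtain ⟨g1, g2, g3, g4⟩ := hgoal
  have e1 : π A * π B * π C = 0 := by
    have := (hπ _).mpr g1; simpa only [map_mul] using this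
  have e2 : π A * (π a ^ 2 - 4 * (π B) * (π C)) + π B * (π b ^ 2 - 4 * (π A) * (π C))
      + π C * (π c ^ 2 - 4 * (π A) * (π B)) = 0 := by
    have := (hπ _).mpr g2
    simpa only [map_add, map_mul, map_sub, map_pow, map_ofNat] using this
  have e3 : -4 * π A * π B * π C + π A * π a ^ 2 + π B * π b ^ 2 + π C * π c ^ 2
      - π a * π b * π c = 0 := by
    have := (hπ _).mpr g3
    simpa only [map_add, map_mul, map_sub, map_pow, map_neg, map_ofNat] using this
  have e4 : (π a ^ 2 - 4 * (π B) * (π C)) * (π b ^ 2 - 4 * (π A) * (π C))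
      * (π c ^ 2 - 4 * (π A) * (π B)) = 0 := by
    have := (hπ _).mpr g4
    simpa only [map_mul, map_sub, map_pow, map_ofNat] using this
  exact key htwo (π A) (π B) (π C) (π a) (π b) (π c)
    (h1.imp (hπ' A).mpr (fun h => h.imp (hπ' B).mpr (hπ' c).mpr))
    (h2'.imp (hπ' A).mpr (fun h => h.imp (hπ' b).mpr (hπ' C).mpr))
    (h3.imp (hπ' a).mpr (fun h => h.imp (hπ' B).mpr (hπ' C).mpr))
    (h4.imp (hπ' A).mpr (fun h => h.imp (hπ' b).mpr (hπ' c).mpr))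
    (h5.imp (hπ' a).mpr (fun h => h.imp (hπ' B).mpr (hπ' c).mpr))
    (h6.imp (hπ' a).mpr (fun h => h.imp (hπ' b).mpr (hπ' C).mpr))
    e1 e2 e3 e4
end

section
/- Let K be a field of characteristic different from 2 and let G be the group of K-algebra automorphisms of the polynomial ring K[a, b, c] generated by the three substitutions σ: (a, b, c) ↦ (b, c, a), τ: (a, b, c) ↦ (b, a, c), and ρ: (a, b, c) ↦ (−a, −b, c). Then the subalgebra of G-invariant polynomials K[a, b, c]^G equals the K-subalgebra generated by the three polynomials a^2 + b^2 + c^2, abc, and a^2 b^2 + a^2 c^2 + b^2 c^2. -/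
open MvPolynomial

/-- The substitution `σ : (a, b, c) ↦ (b, c, a)` as a `K`-algebra automorphism of
`K[a,b,c]`. -/
noncomputable def sigmaAut (K : Type*) [CommRing K] :
    MvPolynomial (Fin 3) K ≃ₐ[K] MvPolynomial (Fin 3) K :=
  renameEquiv K (finRotate 3)

/-- The substitution `τ : (a, b, c) ↦ (b, a, c)` as a `K`-algebra automorphism of
`K[a,b,c]`. -/
noncomputable def tauAut (K : Type*) [CommRing K] :
    MvPolynomial (Fin 3) K ≃ₐ[K] MvPolynomial (Fin 3) K :=
  renameEquiv K (Equiv.swap (0 : Fin 3) 1)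

/-- The substitution `ρ : (a, b, c) ↦ (−a, −b, c)` as a `K`-algebra automorphism of
`K[a,b,c]`. -/
noncomputable def rhoAut (K : Type*) [CommRing K] :
    MvPolynomial (Fin 3) K ≃ₐ[K] MvPolynomial (Fin 3) K :=
  AlgEquiv.ofAlgHom
    (aeval fun i : Fin 3 => if i.val = 2 then X i else -X i)
    (aeval fun i : Fin 3 => if i.val = 2 then X i else -X i)
    (by apply MvPolynomial.algHom_ext; intro i; fin_cases i <;> simp)
    (by apply MvPolynomial.algHom_ext; intro i; fin_cases i <;> simp)

section Helpers

variable {K : Type*} [Field K]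

lemma aeval_sign_monomial (s : Fin 3 → K) (m : Fin 3 →₀ ℕ) (c : K) :
    aeval (fun i => C (s i) * X i) (monomial m c) =
      C (∏ i, s i ^ m i) * monomial m c := by
  rw [aeval_monomial, monomial_eq]
  rw [Finsupp.prod_fintype _ _ (fun i => pow_zero _),
      Finsupp.prod_fintype _ _ (fun i => pow_zero _)]
  simp_rw [mul_pow, ← C_pow]
  rw [Finset.prod_mul_distrib, ← map_prod, algebraMap_eq]
  ring

lemma coeff_aeval_sign (s : Fin 3 → K) (p : MvPolynomial (Fin 3) K) (m : Fin 3 →₀ ℕ) :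
    coeff m (aeval (fun i => C (s i) * X i) p) = (∏ i, s i ^ m i) * coeff m p := by
  conv_lhs => rw [p.as_sum, map_sum]
  simp_rw [aeval_sign_monomial]
  rw [coeff_sum]
  simp_rw [coeff_C_mul, coeff_monomial]
  rw [Finset.sum_eq_single m]
  · simp
  · intro b _ hb; simp [hb]
  · intro hm; rw [notMem_support_iff] at hm; simp [hm]

lemma expand2_monomial (d : Fin 3 →₀ ℕ) (r : K) :
    expand 2 (monomial d r) = monomial (2 • d) r := by
  rw [expand_monomial, monomial_eq]

lemma coeff_expand2 (d : Fin 3 →₀ ℕ) (q : MvPolynomial (Fin 3) K) :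
    coeff (2 • d) (expand 2 q) = coeff d q := by
  conv_lhs => rw [q.as_sum, map_sum]
  simp_rw [expand2_monomial]
  rw [coeff_sum]
  simp_rw [coeff_monomial]
  rw [Finset.sum_eq_single d]
  · simp
  · intro b _ hb
    have : ¬ (2 • b = 2 • d) := by
      intro h; apply hb; ext i
      have := DFunLike.congr_fun h i
      simp only [Finsupp.smul_apply, smul_eq_mul] at this
      omega
    simp [this]
  · intro hd; rw [notMem_support_iff] at hd; simp [hd]

lemma expand2_injective :
    Function.Injective (expand 2 : MvPolynomial (Fin 3) K →ₐ[K] MvPolynomial (Fin 3) K) := by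
  intro a b h
  ext d
  rw [← coeff_expand2 d a, ← coeff_expand2 d b, h]

noncomputable def uu : Fin 3 →₀ ℕ :=
  Finsupp.single 0 1 + Finsupp.single 1 1 + Finsupp.single 2 1

lemma uu_apply (i : Fin 3) : uu i = 1 := by
  fin_cases i <;> simp [uu, Finsupp.single_apply]

lemma xyz_eq : (X 0 * X 1 * X 2 : MvPolynomial (Fin 3) K) = monomial uu 1 := by
  rw [X, X, X, monomial_mul, monomial_mul, uu]
  norm_num

lemma even_factor (q : MvPolynomial (Fin 3) K) (h : ∀ m ∈ q.support, ∀ i, Even (m i)) :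
    ∃ P, expand 2 P = q := by
  refine ⟨∑ m ∈ q.support, monomial (m.mapRange (· / 2) (Nat.zero_div 2)) (coeff m q), ?_⟩
  rw [map_sum]
  conv_rhs => rw [q.as_sum]
  refine Finset.sum_congr rfl fun m hm => ?_
  rw [expand2_monomial]
  have hsm : 2 • m.mapRange (· / 2) (Nat.zero_div 2) = m := by
    ext i
    obtain ⟨k, hk⟩ := h m hm i
    simp only [Finsupp.smul_apply, Finsupp.mapRange_apply, smul_eq_mul]
    omega
  rw [hsm]

lemma odd_factor (q : MvPolynomial (Fin 3) K) (h : ∀ m ∈ q.support, ∀ i, Odd (m i)) :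
    ∃ Q, monomial uu (1 : K) * expand 2 Q = q := by
  refine ⟨∑ m ∈ q.support, monomial ((m - uu).mapRange (· / 2) (Nat.zero_div 2)) (coeff m q), ?_⟩
  rw [map_sum, Finset.mul_sum]
  conv_rhs => rw [q.as_sum]
  refine Finset.sum_congr rfl fun m hm => ?_
  rw [expand2_monomial, monomial_mul, one_mul]
  have hsm : uu + 2 • (m - uu).mapRange (· / 2) (Nat.zero_div 2) = m := by
    ext i
    obtain ⟨k, hk⟩ := h m hm i
    simp only [Finsupp.coe_add, Pi.add_apply, Finsupp.smul_apply, Finsupp.mapRange_apply,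
      smul_eq_mul, Finsupp.tsub_apply, uu_apply]
    omega
  rw [hsm]

lemma sign_even (hK : (2 : K) ≠ 0) {c : K} (hc : c ≠ 0) {n : ℕ}
    (h : c = (-1) ^ n * c) : Even n := by
  by_contra hodd
  rw [Nat.not_even_iff_odd] at hodd
  rw [hodd.neg_one_pow, neg_one_mul] at h
  apply hc
  have h2 : 2 * c = 0 := by linear_combination h
  rcases mul_eq_zero.mp h2 with h' | h'
  · exact absurd h' hK
  · exact h'

lemma esymm2_eq : esymm (Fin 3) K 2 = X 0 * X 1 + X 0 * X 2 + X 1 * X 2 := by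
  rw [esymm, show (Finset.univ : Finset (Fin 3)).powersetCard 2 = {{0,1},{0,2},{1,2}} by decide]
  rw [show ({{0,1},{0,2},{1,2}} : Finset (Finset (Fin 3))) = insert {0,1} (insert {0,2} {{1,2}})
    from rfl]
  rw [Finset.sum_insert (by decide), Finset.sum_insert (by decide), Finset.sum_singleton,
    show ({0,1} : Finset (Fin 3)) = insert 0 {1} from rfl,
    Finset.prod_insert (by decide), Finset.prod_singleton,
    show ({0,2} : Finset (Fin 3)) = insert 0 {2} from rfl,
    Finset.prod_insert (by decide), Finset.prod_singleton,
    show ({1,2} : Finset (Fin 3)) = insert 1 {2} from rfl,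
    Finset.prod_insert (by decide), Finset.prod_singleton]
  ring

lemma esymm3_eq : esymm (Fin 3) K 3 = X 0 * X 1 * X 2 := by
  rw [esymm, show (Finset.univ : Finset (Fin 3)).powersetCard 3 = {{0,1,2}} by decide]
  rw [Finset.sum_singleton,
    show ({0,1,2} : Finset (Fin 3)) = insert 0 (insert 1 {2}) from rfl,
    Finset.prod_insert (by decide), Finset.prod_insert (by decide), Finset.prod_singleton,
    mul_assoc]

lemma expand2_sym_mem (R : MvPolynomial (Fin 3) K) (hs : R.IsSymmetric) :
    expand 2 R ∈ Algebra.adjoin K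
      {(X 0)^2 + (X 1)^2 + (X 2)^2,
       (X 0) * (X 1) * (X 2),
       (X 0)^2 * (X 1)^2 + (X 0)^2 * (X 2)^2 + (X 1)^2 * (X 2)^2} := by
  obtain ⟨q, hq⟩ := esymmAlgHom_fin_surjective (R := K) (n := 3) le_rfl
    ⟨R, (mem_symmetricSubalgebra R).mpr hs⟩
  have hR : R = aeval (R := K) (fun i : Fin 3 => esymm (Fin 3) K (i + 1)) q := by
    rw [← esymmAlgHom_apply, hq]
  have h2 : expand 2 R = aeval (fun i : Fin 3 => expand 2 (esymm (Fin 3) K (i + 1))) q := by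
    rw [hR, comp_aeval_apply]
  rw [h2]
  have hrange : aeval (fun i : Fin 3 => expand 2 (esymm (Fin 3) K (i + 1))) q ∈
      Algebra.adjoin K (Set.range fun i : Fin 3 => expand 2 (esymm (Fin 3) K (i + 1))) := by
    rw [Algebra.adjoin_range_eq_range_aeval]; exact ⟨q, rfl⟩
  refine Algebra.adjoin_le (Set.range_subset_iff.mpr ?_) hrange
  intro i
  fin_cases i
  · show expand 2 (esymm (Fin 3) K 1) ∈ _
    rw [esymm_one, map_sum]
    simp_rw [expand_X]
    rw [Fin.sum_univ_three]
    exact Algebra.subset_adjoin (Set.mem_insert _ _)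
  · show expand 2 (esymm (Fin 3) K 2) ∈ _
    rw [esymm2_eq, map_add, map_add, map_mul, map_mul, map_mul, expand_X, expand_X, expand_X]
    exact Algebra.subset_adjoin
      (Set.mem_insert_of_mem _ (Set.mem_insert_of_mem _ (Set.mem_singleton _)))
  · show expand 2 (esymm (Fin 3) K 3) ∈ _
    rw [esymm3_eq, map_mul, map_mul, expand_X, expand_X, expand_X]
    have : (X 0 ^ 2 * X 1 ^ 2 * X 2 ^ 2 : MvPolynomial (Fin 3) K) =
        ((X 0) * (X 1) * (X 2)) ^ 2 := by ring
    rw [this]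
    exact Subalgebra.pow_mem _
      (Algebra.subset_adjoin (Set.mem_insert_of_mem _ (Set.mem_insert _ _))) 2

lemma fix_of_adjoin {A : Type*} [CommSemiring A] [Algebra K A]
    (g : A ≃ₐ[K] A) (S : Set A) (hS : ∀ s ∈ S, g s = s) {x : A}
    (hx : x ∈ Algebra.adjoin K S) : g x = x := by
  induction hx using Algebra.adjoin_induction with
  | mem s hs => exact hS s hs
  | algebraMap r => exact g.commutes r
  | add x y _ _ hx hy => rw [map_add, hx, hy]
  | mul x y _ _ hx hy => rw [map_mul, hx, hy]

end Helpers

section Helpers2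

variable {K : Type*} [Field K]

lemma perm_invariant (p : MvPolynomial (Fin 3) K)
    (hσ : sigmaAut K p = p) (hτ : tauAut K p = p) :
    ∀ e : Equiv.Perm (Fin 3), rename (⇑e) p = p := by
  have htop : Subgroup.closure ({finRotate 3, Equiv.swap (0 : Fin 3) 1} :
      Set (Equiv.Perm (Fin 3))) = ⊤ := by
    have h := Equiv.Perm.closure_cycle_adjacent_swap (isCycle_finRotate (n := 1))
      support_finRotate 0
    rwa [show (finRotate 3) 0 = 1 from by decide] at h
  intro e
  have he : e ∈ Subgroup.closure ({finRotate 3, Equiv.swap (0 : Fin 3) 1} :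
      Set (Equiv.Perm (Fin 3))) := htop ▸ Subgroup.mem_top e
  induction he using Subgroup.closure_induction with
  | mem x hx =>
    rcases hx with rfl | rfl
    · exact hσ
    · exact hτ
  | one => simp [rename_id]
  | mul x y _ _ hx hy =>
    rw [Equiv.Perm.coe_mul, ← rename_rename, hy, hx]
  | inv x _ hx =>
    have : rename (⇑x⁻¹) (rename (⇑x) p) = p := by
      rw [rename_rename, show (⇑x⁻¹ ∘ ⇑x) = id from by funext i; simp, rename_id, AlgHom.id_apply]
    rwa [hx] at this

end Helpers2

/-- Proposition (Prop:Invariants_Generate): over a field of characteristic different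
from `2`, the algebra of polynomials in `K[a,b,c]` invariant under the group `G`
generated by `σ, τ, ρ` is generated by `a² + b² + c²`, `abc` and
`a²b² + a²c² + b²c²`. -/
theorem stmt_5 (K : Type*) [Field K] (hK : (2 : K) ≠ 0)
    (p : MvPolynomial (Fin 3) K) :
    (∀ g ∈ Subgroup.closure {sigmaAut K, tauAut K, rhoAut K}, g p = p) ↔
      p ∈ Algebra.adjoin K
        {(X 0)^2 + (X 1)^2 + (X 2)^2,
         (X 0) * (X 1) * (X 2),
         (X 0)^2 * (X 1)^2 + (X 0)^2 * (X 2)^2 + (X 1)^2 * (X 2)^2} := by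
  classical
  constructor
  · -- hard direction
    intro h
    have hσ : sigmaAut K p = p := h _ (Subgroup.subset_closure (Set.mem_insert _ _))
    have hτ : tauAut K p = p :=
      h _ (Subgroup.subset_closure (Set.mem_insert_of_mem _ (Set.mem_insert _ _)))
    have hρ : rhoAut K p = p :=
      h _ (Subgroup.subset_closure
        (Set.mem_insert_of_mem _ (Set.mem_insert_of_mem _ rfl)))
    have hperm := perm_invariant p hσ hτ
    -- sign invariances
    have h01 : aeval (fun i => C (![(-1 : K), -1, 1] i) * X i) p = p := by
      have hfun : (fun i : Fin 3 => C (![(-1 : K), -1, 1] i) * X i) =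
          (fun i : Fin 3 => if i.val = 2 then X i else -(X i : MvPolynomial (Fin 3) K)) := by
        funext i; fin_cases i <;> simp
      rw [hfun]; exact hρ
    have h12 : aeval (fun i => C (![(1 : K), -1, -1] i) * X i) p = p := by
      have key : aeval (fun i => C (![(1 : K), -1, -1] i) * X i) p =
          rename (⇑(Equiv.swap (0 : Fin 3) 2))
            (aeval (fun i => C (![(-1 : K), -1, 1] i) * X i)
              (rename (⇑(Equiv.swap (0 : Fin 3) 2)) p)) := by
        rw [aeval_rename, comp_aeval_apply]
        have hfun2 : (fun i : Fin 3 => rename (⇑(Equiv.swap (0 : Fin 3) 2))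
            (((fun j : Fin 3 => C (![(-1 : K), -1, 1] j) * X j) ∘
              ⇑(Equiv.swap (0 : Fin 3) 2)) i)) =
            (fun i : Fin 3 => C (![(1 : K), -1, -1] i) * X i) := by
          funext i
          fin_cases i <;>
            simp [Equiv.swap_apply_left, Equiv.swap_apply_right,
              show Equiv.swap (0 : Fin 3) 2 1 = 1 from by decide]
        rw [hfun2]
      rw [key, hperm, h01, hperm]
    -- parity of exponents
    have hpar : ∀ m ∈ p.support,
        ((Even (m 0) ↔ Even (m 1)) ∧ (Even (m 1) ↔ Even (m 2))) := by
      intro m hm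
      have hc : coeff m p ≠ 0 := mem_support_iff.mp hm
      have e01 : Even (m 0 + m 1) := by
        have hh := coeff_aeval_sign (![(-1 : K), -1, 1]) p m
        rw [h01, Fin.prod_univ_three] at hh
        simp only [Matrix.cons_val_zero, Matrix.cons_val_one, Matrix.head_cons,
          Matrix.cons_val_two, Matrix.tail_cons, one_pow, mul_one, ← pow_add] at hh
        exact sign_even hK hc hh
      have e12 : Even (m 1 + m 2) := by
        have hh := coeff_aeval_sign (![(1 : K), -1, -1]) p m
        rw [h12, Fin.prod_univ_three] at hh
        simp only [Matrix.cons_val_zero, Matrix.cons_val_one, Matrix.head_cons,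
          Matrix.cons_val_two, Matrix.tail_cons, one_pow, one_mul, mul_assoc, ← pow_add] at hh
        exact sign_even hK hc hh
      exact ⟨Nat.even_add.mp e01, Nat.even_add.mp e12⟩
    -- even part
    set pe : MvPolynomial (Fin 3) K :=
      ∑ m ∈ p.support.filter (fun m => Even (m 0)), monomial m (coeff m p) with hpe
    have hcoeff_pe : ∀ m, coeff m pe = if Even (m 0) then coeff m p else 0 := by
      intro m
      rw [hpe, coeff_sum]
      simp_rw [coeff_monomial]
      rw [Finset.sum_ite_eq' (p.support.filter (fun m => Even (m 0))) m (fun m' => coeff m' p)]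
      by_cases hs : m ∈ p.support
      · by_cases hEv : Even (m 0) <;> simp [Finset.mem_filter, hEv, hs]
      · rw [notMem_support_iff] at hs
        by_cases hEv : Even (m 0) <;>
          simp [Finset.mem_filter, hEv, hs, mem_support_iff]
    have hcoeff_po : ∀ m, coeff m (p - pe) = if Even (m 0) then 0 else coeff m p := by
      intro m
      rw [coeff_sub, hcoeff_pe]
      by_cases hEv : Even (m 0) <;> simp [hEv]
    have hpe_supp : ∀ m ∈ pe.support, ∀ i, Even (m i) := by
      intro m hm i
      have hc := mem_support_iff.mp hm
      rw [hcoeff_pe] at hc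
      by_cases hEv : Even (m 0)
      · rw [if_pos hEv] at hc
        have hms : m ∈ p.support := mem_support_iff.mpr hc
        have := hpar m hms
        fin_cases i <;> tauto
      · simp [hEv] at hc
    have hpo_supp : ∀ m ∈ (p - pe).support, ∀ i, Odd (m i) := by
      intro m hm i
      have hc := mem_support_iff.mp hm
      rw [hcoeff_po] at hc
      by_cases hEv : Even (m 0)
      · simp [hEv] at hc
      · rw [if_neg hEv] at hc
        have hms : m ∈ p.support := mem_support_iff.mpr hc
        have := hpar m hms
        rw [← Nat.not_even_iff_odd]
        fin_cases i <;> tauto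
    have hpe_inv : ∀ e : Equiv.Perm (Fin 3), rename (⇑e) pe = pe := by
      intro e
      ext m
      set m' := Finsupp.mapDomain (⇑e.symm) m with hm'
      have hmm : Finsupp.mapDomain (⇑e) m' = m := by
        rw [hm', ← Finsupp.mapDomain_comp, Equiv.self_comp_symm, Finsupp.mapDomain_id]
      have h1 : coeff m (rename (⇑e) pe) = coeff m' pe := by
        rw [← hmm, coeff_rename_mapDomain _ e.injective]
      have h2 : coeff m' p = coeff m p := by
        conv_rhs => rw [← hperm e]
        rw [← hmm, coeff_rename_mapDomain _ e.injective]
      have hm'0 : m' 0 = m (e 0) := by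
        rw [hm', Finsupp.mapDomain_equiv_apply, Equiv.symm_symm]
      rw [h1, hcoeff_pe, hcoeff_pe, hm'0, h2]
      by_cases hc : coeff m p = 0
      · simp [hc]
      · have hms : m ∈ p.support := mem_support_iff.mpr hc
        have hall : ∀ i, (Even (m i) ↔ Even (m 0)) := by
          have := hpar m hms
          intro i; fin_cases i <;> tauto
        rw [if_congr (hall (e 0)) rfl rfl]
    have hpo_inv : ∀ e : Equiv.Perm (Fin 3), rename (⇑e) (p - pe) = p - pe := by
      intro e
      rw [map_sub, hperm e, hpe_inv e]
    obtain ⟨P, hP⟩ := even_factor pe hpe_supp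
    obtain ⟨Q, hQ⟩ := odd_factor (p - pe) hpo_supp
    have hPsym : P.IsSymmetric := by
      intro e
      apply expand2_injective
      show expand 2 (rename (⇑e) P) = expand 2 P
      rw [← rename_expand, hP, hpe_inv e]
    have hQsym : Q.IsSymmetric := by
      intro e
      apply expand2_injective
      show expand 2 (rename (⇑e) Q) = expand 2 Q
      have hmono : (monomial uu (1 : K)) ≠ 0 := by
        rw [Ne, monomial_eq_zero]; exact one_ne_zero
      apply mul_left_cancel₀ hmono
      have huu : Finsupp.mapDomain (⇑e) uu = uu := by
        ext i
        rw [Finsupp.mapDomain_equiv_apply, uu_apply, uu_apply]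
      have hren : rename (⇑e) (monomial uu (1 : K)) = monomial uu 1 := by
        rw [rename_monomial, huu]
      calc monomial uu (1 : K) * expand 2 (rename (⇑e) Q)
          = rename (⇑e) (monomial uu 1 * expand 2 Q) := by
            rw [map_mul, hren, rename_expand]
        _ = monomial uu 1 * expand 2 Q := by rw [hQ, hpo_inv e]
    have hfinal : p = expand 2 P + monomial uu 1 * expand 2 Q := by
      rw [hP, hQ]; ring
    rw [hfinal]
    refine Subalgebra.add_mem _ (expand2_sym_mem P hPsym) (Subalgebra.mul_mem _ ?_
      (expand2_sym_mem Q hQsym))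
    rw [← xyz_eq]
    exact Algebra.subset_adjoin (Set.mem_insert_of_mem _ (Set.mem_insert _ _))
  · -- easy direction
    intro hp g hg
    induction hg using Subgroup.closure_induction with
    | mem g' hg' =>
      rcases hg' with rfl | rfl | rfl
      · refine fix_of_adjoin _ _ ?_ hp
        rintro s (rfl | rfl | rfl)
        · simp only [sigmaAut, renameEquiv_apply, map_add, map_pow, rename_X,
            show (finRotate 3) 0 = 1 from by decide, show (finRotate 3) 1 = 2 from by decide,
            show (finRotate 3) 2 = 0 from by decide]
          ring
        · simp only [sigmaAut, renameEquiv_apply, map_mul, rename_X,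
            show (finRotate 3) 0 = 1 from by decide, show (finRotate 3) 1 = 2 from by decide,
            show (finRotate 3) 2 = 0 from by decide]
          ring
        · simp only [sigmaAut, renameEquiv_apply, map_add, map_mul, map_pow, rename_X,
            show (finRotate 3) 0 = 1 from by decide, show (finRotate 3) 1 = 2 from by decide,
            show (finRotate 3) 2 = 0 from by decide]
          ring
      · refine fix_of_adjoin _ _ ?_ hp
        rintro s (rfl | rfl | rfl)
        · simp only [tauAut, renameEquiv_apply, map_add, map_pow, rename_X,
            Equiv.swap_apply_left, Equiv.swap_apply_right,
            show Equiv.swap (0 : Fin 3) 1 2 = 2 from by decide]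
          ring
        · simp only [tauAut, renameEquiv_apply, map_mul, rename_X,
            Equiv.swap_apply_left, Equiv.swap_apply_right,
            show Equiv.swap (0 : Fin 3) 1 2 = 2 from by decide]
          ring
        · simp only [tauAut, renameEquiv_apply, map_add, map_mul, map_pow, rename_X,
            Equiv.swap_apply_left, Equiv.swap_apply_right,
            show Equiv.swap (0 : Fin 3) 1 2 = 2 from by decide]
          ring
      · refine fix_of_adjoin _ _ ?_ hp
        rintro s (rfl | rfl | rfl)
        · show aeval _ _ = _
          simp only [map_add, map_pow, aeval_X]
          norm_num
        · show aeval _ _ = _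
          simp only [map_mul, aeval_X]
          ring_nf
          simp
        · show aeval _ _ = _
          simp only [map_add, map_mul, map_pow, aeval_X]
          norm_num
    | one => rfl
    | mul x y _ _ hx hy =>
      show (x * y) p = p
      rw [AlgEquiv.mul_apply, hy, hx]
    | inv x _ hx =>
      show x.symm p = p
      conv_lhs => rw [← hx]
      exact x.symm_apply_apply p
end

section
/- Let O be a valuation ring with additive valuation v whose residue characteristic is different from 2 (i.e., v(2) = 0), and let M, N ∈ O. Set L_1 = N + 10, L_2 = M^2 − 4N + 8, L_3 = (2M + N + 2)(2M − N − 2). If 2·v(L_1) ≥ v(L_2) and 3·v(L_2) = 2·v(L_3), then v(L_2) = v(L_3) = 0; consequently v(2^4·L_2^4·L_3^2) = 0, i.e., the discriminant Δ(Y) = 2^4 L_2^4 L_3^2 of the hyperelliptic curve is a unit. -/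
/-- The valuation-theoretic direction of Proposition (prop:goodhyp): with
`L₁ = N + 10`, `L₂ = M² − 4N + 8`, `L₃ = (2M + N + 2)(2M − N − 2)` in a valuation
ring of residue characteristic different from `2`, if `2·v(L₁) ≥ v(L₂)` and
`3·v(L₂) = 2·v(L₃)`, then `v(L₂) = v(L₃) = 0` and hence the discriminant
`Δ(Y) = 2⁴·L₂⁴·L₃²` of the hyperelliptic curve is a unit. -/
theorem stmt_14 {O : Type*} [CommRing O] {Γ : Type*} [AddCommGroup Γ] [LinearOrder Γ] [IsOrderedAddMonoid Γ]
    (v : AddValuation O (WithTop Γ))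
    (hnonneg : ∀ x : O, 0 ≤ v x) (htop : ∀ x : O, v x = ⊤ ↔ x = 0)
    (h2 : v 2 = 0) (M N : O)
    (h1 : v (M^2 - 4*N + 8) ≤ 2 • v (N + 10))
    (h3 : 3 • v (M^2 - 4*N + 8) = 2 • v ((2*M + N + 2) * (2*M - N - 2))) :
    v (M^2 - 4*N + 8) = 0 ∧ v ((2*M + N + 2) * (2*M - N - 2)) = 0 ∧
      v (2^4 * (M^2 - 4*N + 8)^4 * ((2*M + N + 2) * (2*M - N - 2))^2) = 0 := by
  set a := v (M^2 - 4*N + 8) with ha_def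
  set b := v ((2*M + N + 2) * (2*M - N - 2)) with hb_def
  have ha0 : 0 ≤ a := hnonneg _
  have hb0 : 0 ≤ b := hnonneg _
  have hv4 : v 4 = 0 := by
    have h4 : (4 : O) = 2 * 2 := by norm_num
    rw [h4, v.map_mul, h2, add_zero]
  have hv16 : v 16 = 0 := by
    have h16 : (16 : O) = 2 ^ 4 := by norm_num
    rw [h16, v.map_pow, h2, smul_zero]
  -- main claim : a = 0
  have ha : a = 0 := by
    by_contra hane
    have hapos : 0 < a := lt_of_le_of_ne ha0 (Ne.symm hane)
    have h3a : 0 < 3 • a := by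
      calc (0 : WithTop Γ) < a := hapos
      _ = a + 0 + 0 := by rw [add_zero, add_zero]
      _ ≤ a + a + a := by
        gcongr
      _ = 3 • a := by
        rw [show (3 : ℕ) = 2 + 1 by rfl, add_nsmul, two_nsmul, one_nsmul]
    have hbpos : 0 < b := by
      rcases eq_or_lt_of_le hb0 with h | h
      · exfalso
        rw [h3, ← h, smul_zero] at h3a
        exact lt_irrefl _ h3a
      · exact h
    -- identity : (N-6)^2 = 4*L₂ - L₃
    have hid : (N - 6)^2 = 4*(M^2 - 4*N + 8) - (2*M + N + 2) * (2*M - N - 2) := by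
      ring
    have hv4L2 : v (4*(M^2 - 4*N + 8)) = a := by
      rw [v.map_mul, hv4, zero_add]
    have hle : min (v (4*(M^2 - 4*N + 8))) b ≤ v ((N - 6)^2) := by
      rw [hid]
      exact v.map_sub _ _
    have hsqpos : 0 < v ((N - 6)^2) := by
      refine lt_of_lt_of_le ?_ hle
      rw [hv4L2]
      exact lt_min hapos hbpos
    have hN6 : 0 < v (N - 6) := by
      by_contra hc
      push_neg at hc
      have : v ((N - 6)^2) ≤ 0 := by
        rw [v.map_pow, two_nsmul]
        calc v (N - 6) + v (N - 6) ≤ 0 + 0 := add_le_add hc hc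
        _ = 0 := add_zero 0
      exact absurd (lt_of_lt_of_le hsqpos this) (lt_irrefl 0)
    have hL1 : v (N + 10) = 0 := by
      have heq : N + 10 = (N - 6) + 16 := by ring
      rw [heq, v.map_add_eq_of_lt_right (by rw [hv16]; exact hN6), hv16]
    rw [hL1, smul_zero] at h1
    exact absurd (lt_of_lt_of_le hapos h1) (lt_irrefl 0)
  have hb : b = 0 := by
    rw [ha, smul_zero] at h3
    have h2b : b + b = 0 := by rw [← two_nsmul, ← h3]
    have : b ≤ 0 := by
      calc b = b + 0 := (add_zero b).symm
      _ ≤ b + b := by gcongr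
      _ = 0 := h2b
    exact le_antisymm this hb0
  refine ⟨ha, hb, ?_⟩
  rw [v.map_mul, v.map_mul, v.map_pow, v.map_pow, v.map_pow, h2, ← ha_def, ← hb_def, ha, hb]
  simp
end
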